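/- Validity does not imply violation: there exists a model M and formula φ such that φ holds at every state of M (M ⊨ φ), yet none of Viol^a_{i,a}(t_b, t_v, φ), Viol^o_{i,a}(t_b, t_v, φ), the repaired-violation RViol_{i,a}(t_b, t_v, t_r, φ), nor the punished-violation PViol_{i,a}(t_b, t_v, t_p, φ) holds at any state. In particular, the violation modalities do not satisfy the necessitation rule. -/
import Mathlib


open scoped Classical

/-- Tree-shaped Kripke model for a fixed norm `i` and agent `a`, as in
"Linking sanctions to norms in practice".  `V`, `D`, `Rep`, `Pun` are the
violation / deadline / repair / punishment markers `V_{i,a}`, `D_{i,a}`,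
`R_{i,a}`, `P_{i,a}`; `Ra` are the transitions labelled with agent `a`. -/
structure NormModel where
  W : Type
  root : W
  R : W → W → Prop
  Ra : W → W → Prop
  hRa : ∀ s s', Ra s s' → R s s'
  depth : W → ℕ
  hroot : depth root = 0
  hdepth : ∀ s s', R s s' → depth s' = depth s + 1
  predUnique : ∀ s' s₁ s₂, R s₁ s' → R s₂ s' → s₁ = s₂
  reach : ∀ s, Relation.ReflTransGen R root s
  V : W → Prop
  D : W → Prop
  Rep : W → Prop
  Pun : W → Prop

namespace NormModel

/-- A path: an infinite `R`-sequence starting at the root. -/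
def IsPath (M : NormModel) (σ : ℕ → M.W) : Prop :=
  σ 0 = M.root ∧ ∀ n, M.R (σ n) (σ (n + 1))

/-- Paths through a state `s`. -/
def PathThrough (M : NormModel) (σ : ℕ → M.W) (s : M.W) : Prop :=
  M.IsPath σ ∧ σ (M.depth s) = s

/-- STIT operator `E_a φ`: `φ` holds at all `a`-successors, and `φ` is not
globally true (the non-triviality condition `M, w ⊨ ¬AG⁺φ`). -/
def Ea (M : NormModel) (φ : M.W → Prop) (s : M.W) : Prop :=
  (∀ s', M.Ra s s' → φ s') ∧ ¬ (∀ s', φ s')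

/-- Act-violation `Viol^a_{i,a}(t_b, t_v, φ)` at `s`:
(1) on all paths through `s` there is a past-or-current state at depth `t_v`
satisfying `V_{i,a}` whose predecessor satisfies `E_a φ`, and
(2) at all past states with depth in `[t_b, t_v]`, `φ → V_{i,a}`. -/
def ViolA (M : NormModel) (tb tv : ℕ) (φ : M.W → Prop) (s : M.W) : Prop :=
  1 ≤ tv ∧ tv ≤ M.depth s ∧
  (∀ σ, M.PathThrough σ s → M.V (σ tv) ∧ M.Ea φ (σ (tv - 1))) ∧
  (∀ σ, M.PathThrough σ s → ∀ t, tb ≤ t → t ≤ tv → φ (σ t) → M.V (σ t))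

/-- The common body of the omission-violation conditions, parametrised by the
"fulfilment or fresh violation" clause used in the counting condition (4). -/
def ViolOBody (M : NormModel) (tb tv : ℕ) (φ : M.W → Prop) (s : M.W)
    (fresh : ℕ → (ℕ → M.W) → Prop) : Prop :=
  tv ≤ M.depth s ∧
  (∀ σ, M.PathThrough σ s → M.V (σ tv) ∧ M.D (σ tv)) ∧
  (∀ σ, M.PathThrough σ s → ∀ t, tb ≤ t → t ≤ tv → M.V (σ t) → ¬ φ (σ t)) ∧
  (∀ σ, M.PathThrough σ s → ∃ u, tb ≤ u ∧ u ≤ M.depth s ∧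
    (M.D (σ u) ∨ u = tb) ∧
    ∀ t, u < t → t ≤ M.depth s → ¬ M.Ea φ (σ t) ∧ ¬ M.D (σ t)) ∧
  (∀ σ, M.PathThrough σ s →
    ((Finset.Icc tb tv).filter (fun t => M.D (σ t))).card >
    ((Finset.Icc tb tv).filter (fun t => fresh t σ)).card)

/-- Auxiliary, fuel-indexed version of the omission-violation modality.
Since fresh omission-violations counted in condition (4) happen at strictly
smaller times, fuel `tv` suffices, and `ViolOAux tb φ tv tv s` is exactly the
intended fixed point. -/
def ViolOAux (M : NormModel) (tb : ℕ) (φ : M.W → Prop) : ℕ → ℕ → M.W → Prop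
  | 0, tv, s => M.ViolOBody tb tv φ s (fun t σ => M.Ea φ (σ t))
  | fuel + 1, tv, s => M.ViolOBody tb tv φ s
      (fun t σ => M.Ea φ (σ t) ∨ (t < tv ∧ M.ViolOAux tb φ fuel t (σ t)))

/-- Omission-violation `Viol^o_{i,a}(t_b, t_v, φ)` at `s`:
(1) a past-or-current `V ∧ D` state at depth `t_v` on all paths,
(2) `V_{i,a} → ¬φ` on `[t_b, t_v]`,
(3) `¬E_a φ ∧ ¬D_{i,a}` backwards until the last deadline or `t_b`,
(4) on each path, deadlines on `[t_b, t_v]` strictly outnumber states with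
`E_a φ` or a fresh omission-violation of `φ`. -/
def ViolO (M : NormModel) (tb tv : ℕ) (φ : M.W → Prop) (s : M.W) : Prop :=
  M.ViolOAux tb φ tv tv s

/-- A violation in general: by acting or by omission. -/
def Viol (M : NormModel) (tb tv : ℕ) (φ : M.W → Prop) (s : M.W) : Prop :=
  M.ViolA tb tv φ s ∨ M.ViolO tb tv φ s

/-- Repaired violation `RViol_{i,a}(t_b, t_v, t_r, φ)`. -/
def RViol (M : NormModel) (tb tv tr : ℕ) (φ : M.W → Prop) (s : M.W) : Prop :=
  M.Viol tb tv φ s ∧ tv ≤ tr ∧ tr ≤ M.depth s ∧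
  (∀ σ, M.PathThrough σ s → M.Ea M.Rep (σ tr)) ∧
  (∀ σ, M.PathThrough σ s →
    ((Finset.Icc tv tr).filter (fun t => M.Ea M.Rep (σ t))).card ≥
    ((Finset.Icc tb tv).filter (fun t => M.Viol tb t φ (σ t))).card)

/-- Punished violation `PViol_{i,a}(t_b, t_v, t_p, φ)`. -/
def PViol (M : NormModel) (tb tv tp : ℕ) (φ : M.W → Prop) (s : M.W) : Prop :=
  M.Viol tb tv φ s ∧ tv ≤ tp ∧ tp ≤ M.depth s ∧
  (∀ σ, M.PathThrough σ s → M.Ea M.Pun (σ tp)) ∧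
  (∀ σ, M.PathThrough σ s →
    ((Finset.Icc tv tp).filter (fun t => M.Ea M.Pun (σ t))).card ≥
    ((Finset.Icc tb tv).filter (fun t => M.Viol tb t φ (σ t))).card)

/-- Prohibition `F_{i,a}(t_b, φ)` at `s`: if the agent sees to it that `φ`,
then every successor state carries a fresh act-violation. -/
def Forb (M : NormModel) (tb : ℕ) (φ : M.W → Prop) (s : M.W) : Prop :=
  M.Ea φ s → ∀ s', M.R s s' → M.ViolA tb (M.depth s') φ s'

end NormModel

open NormModel

def chainModel : NormModel where
  W := ℕ
  root := 0
  R m n := n = m + 1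
  Ra m n := n = m + 1
  hRa _ _ h := h
  depth := id
  hroot := rfl
  hdepth _ _ h := h
  predUnique _ _ _ h₁ h₂ := by omega
  reach s := by
    induction s with
    | zero => exact Relation.ReflTransGen.refl
    | succ n ih => exact ih.tail rfl
  V _ := False
  D _ := False
  Rep _ := False
  Pun _ := False

lemma chain_path (s : ℕ) : chainModel.PathThrough id s :=
  ⟨⟨rfl, fun _ => rfl⟩, rfl⟩

lemma no_Ea (s : ℕ) : ¬ chainModel.Ea (fun _ => True) s := by
  intro h; exact h.2 (fun _ => trivial)

lemma no_ViolA (tb tv s : ℕ) : ¬ chainModel.ViolA tb tv (fun _ => True) s := by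
  rintro ⟨_, _, h3, _⟩
  exact no_Ea _ (h3 id (chain_path s)).2

lemma no_Body (tb tv s : ℕ) (fresh : ℕ → (ℕ → ℕ) → Prop) :
    ¬ chainModel.ViolOBody tb tv (fun _ => True) s fresh := by
  rintro ⟨_, h2, _⟩
  exact (h2 id (chain_path s)).1

lemma no_ViolO (tb tv s : ℕ) : ¬ chainModel.ViolO tb tv (fun _ => True) s := by
  unfold NormModel.ViolO
  cases tv with
  | zero => exact no_Body tb 0 s _
  | succ n => exact no_Body tb (n+1) s _

lemma no_Viol (tb tv s : ℕ) : ¬ chainModel.Viol tb tv (fun _ => True) s := by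
  rintro (h | h)
  · exact no_ViolA tb tv s h
  · exact no_ViolO tb tv s h

/-- validity does not imply violation — there is a model and a
formula true at every state for which none of the four violation modalities
holds at any state, for any choice of time parameters.  Hence the violation
modalities do not satisfy necessitation. -/
theorem necessitation_fails :
    ∃ (M : NormModel) (φ : M.W → Prop),
      (∀ s, φ s) ∧
      ∀ (tb tv tr tp : ℕ) (s : M.W),
        ¬ M.ViolA tb tv φ s ∧ ¬ M.ViolO tb tv φ s ∧
        ¬ M.RViol tb tv tr φ s ∧ ¬ M.PViol tb tv tp φ s := by
  refine ⟨chainModel, fun _ => True, fun _ => trivial, fun tb tv tr tp s => ?_⟩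
  exact ⟨no_ViolA tb tv s, no_ViolO tb tv s,
    fun h => no_Viol tb tv s h.1, fun h => no_Viol tb tv s h.1⟩
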